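/- For every integer n≥1 and every real γ>0 there exists a constant c>0, depending only on n and γ, such that for all x∈ℝ: ∫_ℝ 1/((1+|x−y|^{n+1})(1+|y|^{γ})) dy ≤ c/(1+|x|^{min(γ,n+1)}). -/

import Mathlib

set_option maxHeartbeats 1000000

open MeasureTheory Real

lemma cde_aux_le {t : ℝ} (ht : 0 ≤ t) {a b : ℝ} (ha : 0 ≤ a) (hab : a ≤ b) :
    1 + t ^ a ≤ 2 * (1 + t ^ b) := by
  rcases le_total t 1 with h | h
  · have h1 : t ^ a ≤ 1 := Real.rpow_le_one ht h ha
    have h2 : 0 ≤ t ^ b := Real.rpow_nonneg ht b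
    linarith
  · have h1 : t ^ a ≤ t ^ b := Real.rpow_le_rpow_of_exponent_le h hab
    have h2 : 0 ≤ t ^ b := Real.rpow_nonneg ht b
    linarith

lemma cde_aux_double {γ : ℝ} (hγ : 0 ≤ γ) {u s : ℝ} (hu : 0 ≤ u) (hs : 0 ≤ s)
    (h : u ≤ 2 * s) : 1 + u ^ γ ≤ 2 ^ γ * (1 + s ^ γ) := by
  have h1 : u ^ γ ≤ (2 * s) ^ γ := Real.rpow_le_rpow hu h hγ
  have h2 : (2 * s : ℝ) ^ γ = 2 ^ γ * s ^ γ := Real.mul_rpow (by norm_num) hs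
  have h3 : (1 : ℝ) ≤ 2 ^ γ := Real.one_le_rpow (by norm_num) hγ
  have h4 : 0 ≤ s ^ γ := Real.rpow_nonneg hs γ
  nlinarith

lemma cde_integrable_aux {r : ℝ} (hr : 1 < r) :
    Integrable (fun y : ℝ => 1 / (1 + |y| ^ r)) := by
  have hbase : Integrable (fun x : ℝ => (1 + ‖x‖) ^ (-r)) :=
    integrable_one_add_norm (by simpa using hr)
  have hcont : Continuous (fun y : ℝ => 1 / (1 + |y| ^ r)) := by
    apply continuous_const.div
    · exact continuous_const.add (continuous_abs.rpow_const fun y => Or.inr (by linarith))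
    · intro y
      positivity
  refine (hbase.const_mul (2 ^ r)).mono' hcont.aestronglyMeasurable ?_
  filter_upwards with y
  have ht : (0:ℝ) ≤ |y| := abs_nonneg y
  have key : (1 + |y|) ^ r ≤ 2 ^ r * (1 + |y| ^ r) := by
    rcases le_total (|y|) 1 with h | h
    · have h1 : (1 + |y|) ^ r ≤ 2 ^ r :=
        Real.rpow_le_rpow (by linarith) (by linarith) (by linarith)
      have h2 : (0:ℝ) ≤ |y| ^ r := Real.rpow_nonneg ht r
      have h3 : (0:ℝ) ≤ (2:ℝ) ^ r := Real.rpow_nonneg (by norm_num) r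
      nlinarith
    · have h1 : (1 + |y|) ^ r ≤ (2 * |y|) ^ r :=
        Real.rpow_le_rpow (by linarith) (by linarith) (by linarith)
      have h2 : (2 * |y| : ℝ) ^ r = 2 ^ r * |y| ^ r := Real.mul_rpow (by norm_num) ht
      have h3 : (0:ℝ) ≤ (2:ℝ) ^ r := Real.rpow_nonneg (by norm_num) r
      nlinarith [Real.rpow_nonneg ht r]
  have hpos : (0:ℝ) < 1 + |y| ^ r := by positivity
  have hpos2 : (0:ℝ) < (1 + |y|) ^ r := Real.rpow_pos_of_pos (by linarith) r
  rw [Real.norm_of_nonneg (by positivity), Real.norm_eq_abs,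
    Real.rpow_neg (by linarith : (0:ℝ) ≤ 1 + |y|), div_le_iff₀ hpos]
  calc (1:ℝ) = (1 + |y|) ^ r * ((1 + |y|) ^ r)⁻¹ := by field_simp
    _ ≤ (2 ^ r * (1 + |y| ^ r)) * ((1 + |y|) ^ r)⁻¹ := by
        apply mul_le_mul_of_nonneg_right key (by positivity)
    _ = 2 ^ r * ((1 + |y|) ^ r)⁻¹ * (1 + |y| ^ r) := by ring

/-- Convolution-type integral estimate:
`∫_ℝ dy/((1+|x−y|^{n+1})(1+|y|^γ)) ≤ c/(1+|x|^{min(γ,n+1)})`. -/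
theorem convolution_decay_estimate (n : ℕ) (hn : 1 ≤ n) (γ : ℝ) (hγ : 0 < γ) :
    ∃ c > (0 : ℝ), ∀ x : ℝ,
      (∫ y : ℝ, 1 / ((1 + |x - y| ^ (n + 1)) * (1 + |y| ^ γ))) ≤
        c / (1 + |x| ^ min γ ((n : ℝ) + 1)) := by
  have hnR : (1:ℝ) ≤ (n:ℝ) := by exact_mod_cast hn
  have hn1 : (1:ℝ) < (n:ℝ) + 1 := by linarith
  set m := min γ ((n : ℝ) + 1) with hm
  have hm0 : 0 < m := lt_min hγ (by linarith)
  have hmγ : m ≤ γ := min_le_left _ _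
  have hmn : m ≤ (n:ℝ) + 1 := min_le_right _ _
  have hcast : ∀ t : ℝ, t ≥ 0 → t ^ ((n:ℝ) + 1) = t ^ (n + 1) := by
    intro t _
    rw [show ((n:ℝ) + 1) = ((n + 1 : ℕ) : ℝ) by push_cast; ring, Real.rpow_natCast]
  have hPr : Integrable (fun t : ℝ => 1 / (1 + |t| ^ ((n:ℝ) + 1))) := cde_integrable_aux hn1
  have hPint : Integrable (fun t : ℝ => 1 / (1 + |t| ^ (n + 1))) := by
    simpa only [fun t : ℝ => hcast (|t|) (abs_nonneg t)] using hPr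
  set P := ∫ t : ℝ, 1 / (1 + |t| ^ (n + 1)) with hP
  have hPnn : 0 ≤ P := integral_nonneg fun t => by positivity
  set Q := ∫ y : ℝ, 1 / (1 + |y| ^ γ) with hQ
  have hQnn : 0 ≤ Q := integral_nonneg fun y => by positivity
  have h2γ : (0:ℝ) < 2 ^ γ := Real.rpow_pos_of_pos (by norm_num) γ
  refine ⟨2 ^ γ * 2 * P + 2 ^ (n + 3) + 2 ^ (n + 2) * Q, ?_, fun x => ?_⟩
  · have h1 : (0:ℝ) ≤ 2 ^ γ * 2 * P := mul_nonneg (by positivity) hPnn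
    have h2 : (0:ℝ) ≤ 2 ^ (n + 2) * Q := mul_nonneg (by positivity) hQnn
    have h3 : (0:ℝ) < 2 ^ (n + 3) := by positivity
    linarith
  have hx0 : (0:ℝ) ≤ |x| := abs_nonneg x
  set D := 1 + |x| ^ m with hDdef
  have hD0 : (0:ℝ) < D := by positivity
  set f : ℝ → ℝ := fun y => 1 / ((1 + |x - y| ^ (n + 1)) * (1 + |y| ^ γ)) with hf
  have hden : ∀ y : ℝ, (0:ℝ) < (1 + |x - y| ^ (n + 1)) * (1 + |y| ^ γ) := fun y => by
    positivity
  have ha : ∀ y : ℝ, (0:ℝ) < 1 + |x - y| ^ (n + 1) := fun y => by positivity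
  have hb : ∀ y : ℝ, (0:ℝ) < 1 + |y| ^ γ := fun y => by positivity
  have hcont : Continuous f := by
    rw [hf]
    apply continuous_const.div
    · exact ((continuous_const.add
        (((continuous_const.sub continuous_id).abs).pow _)).mul
        (continuous_const.add (continuous_abs.rpow_const fun y => Or.inr hγ.le)))
    · intro y
      positivity
  have hg : Integrable (fun y : ℝ => 1 / (1 + |x - y| ^ (n + 1))) := hPint.comp_sub_left x
  have hf_int : Integrable f := by
    refine hg.mono' hcont.aestronglyMeasurable ?_
    filter_upwards with y
    have hfy : (0:ℝ) ≤ f y := by rw [hf]; positivity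
    rw [Real.norm_of_nonneg hfy, hf]
    apply one_div_le_one_div_of_le (ha y)
    exact le_mul_of_one_le_right (ha y).le
      (le_add_of_nonneg_right (Real.rpow_nonneg (abs_nonneg y) γ))
  set A : Set ℝ := {y : ℝ | |x| / 2 ≤ |y|} with hAdef
  have hA : MeasurableSet A := (isClosed_le continuous_const continuous_abs).measurableSet
  -- bound on A
  have hIA : ∫ y in A, f y ≤ (2 ^ γ * 2 * P) / D := by
    have hgA : ∀ y ∈ A, f y ≤ (2 ^ γ * 2 / D) * (1 / (1 + |x - y| ^ (n + 1))) := by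
      intro y hy
      have hy' : |x| ≤ 2 * |y| := by
        have : |x| / 2 ≤ |y| := hy
        linarith
      have hD1 : D ≤ 2 * (1 + |x| ^ γ) := cde_aux_le hx0 hm0.le hmγ
      have hD2 : 1 + |x| ^ γ ≤ 2 ^ γ * (1 + |y| ^ γ) :=
        cde_aux_double hγ.le hx0 (abs_nonneg y) hy'
      have hDle : D ≤ 2 ^ γ * 2 * (1 + |y| ^ γ) := by linarith
      have heq : f y = (1 / (1 + |y| ^ γ)) * (1 / (1 + |x - y| ^ (n + 1))) := by
        rw [hf, one_div_mul_one_div, mul_comm]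
      rw [heq]
      apply mul_le_mul_of_nonneg_right _ (by positivity)
      rw [div_le_div_iff₀ (hb y) hD0]
      linarith
    have h1 : ∫ y in A, f y ≤ ∫ y in A, (2 ^ γ * 2 / D) * (1 / (1 + |x - y| ^ (n + 1))) :=
      setIntegral_mono_on hf_int.integrableOn ((hg.const_mul _).integrableOn) hA hgA
    have h2 : ∫ y in A, (2 ^ γ * 2 / D) * (1 / (1 + |x - y| ^ (n + 1)))
        ≤ ∫ y : ℝ, (2 ^ γ * 2 / D) * (1 / (1 + |x - y| ^ (n + 1))) :=
      setIntegral_le_integral (hg.const_mul _) (ae_of_all _ fun y => by positivity)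
    have h3 : ∫ y : ℝ, (2 ^ γ * 2 / D) * (1 / (1 + |x - y| ^ (n + 1)))
        = (2 ^ γ * 2 / D) * P := by
      rw [integral_const_mul]
      congr 1
      exact integral_sub_left_eq_self (fun t => 1 / (1 + |t| ^ (n + 1))) volume x
    calc ∫ y in A, f y ≤ ∫ y in A, (2 ^ γ * 2 / D) * (1 / (1 + |x - y| ^ (n + 1))) := h1
      _ ≤ ∫ y : ℝ, (2 ^ γ * 2 / D) * (1 / (1 + |x - y| ^ (n + 1))) := h2
      _ = (2 ^ γ * 2 / D) * P := h3
      _ = (2 ^ γ * 2 * P) / D := by ring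
  -- common facts on Aᶜ
  have hxy' : ∀ y ∈ Aᶜ, |x| ≤ 2 * |x - y| := by
    intro y hy
    have h1 : |y| < |x| / 2 := not_le.mp hy
    have h2 : |x| - |y| ≤ |x - y| := abs_sub_abs_le_abs_sub x y
    linarith
  set E := 1 + |x| ^ (n + 1) with hEdef
  have hE0 : (0:ℝ) < E := by positivity
  have hEbound : ∀ y ∈ Aᶜ, E ≤ 2 ^ (n + 1) * (1 + |x - y| ^ (n + 1)) := by
    intro y hy
    have h := cde_aux_double (γ := (n:ℝ) + 1) (by linarith) hx0 (abs_nonneg (x - y))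
      (hxy' y hy)
    rw [hcast (|x|) hx0, hcast (|x - y|) (abs_nonneg _),
      hcast 2 (by norm_num)] at h
    simpa [hEdef] using h
  have hDE : D ≤ 2 * E := by
    have h := cde_aux_le hx0 hm0.le hmn
    rw [hcast (|x|) hx0] at h
    simpa [hDdef, hEdef] using h
  -- bound on Aᶜ
  have hIAc : ∫ y in Aᶜ, f y ≤ (2 ^ (n + 3) + 2 ^ (n + 2) * Q) / D := by
    rcases le_or_gt γ 1 with hγ1 | hγ1
    · -- γ ≤ 1 : use volume bound
      have hmeq : m = γ := min_eq_left (by linarith)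
      have hptc : ∀ y ∈ Aᶜ, f y ≤ 2 ^ (n + 1) / E := by
        intro y hy
        have h1 := hEbound y hy
        have h2 : (1:ℝ) ≤ 1 + |y| ^ γ := le_add_of_nonneg_right
          (Real.rpow_nonneg (abs_nonneg y) γ)
        rw [hf]
        rw [div_le_div_iff₀ (hden y) hE0]
        have h3 : (0:ℝ) ≤ 2 ^ (n + 1) * (1 + |x - y| ^ (n + 1)) := by positivity
        nlinarith
      have hball : Aᶜ = Metric.ball (0:ℝ) (|x| / 2) := by
        ext y
        simp [hAdef, Real.dist_eq, not_le]
      have hvol : volume Aᶜ = ENNReal.ofReal |x| := by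
        rw [hball, Real.volume_ball]
        congr 1
        ring
      have hvol_lt : volume Aᶜ < ⊤ := by
        rw [hvol]; exact ENNReal.ofReal_lt_top
      have h1 : ∫ y in Aᶜ, f y ≤ ∫ _ in Aᶜ, (2 ^ (n + 1) / E : ℝ) :=
        setIntegral_mono_on hf_int.integrableOn
          (integrableOn_const hvol_lt.ne) hA.compl hptc
      have h2 : ∫ _ in Aᶜ, (2 ^ (n + 1) / E : ℝ) = |x| * (2 ^ (n + 1) / E) := by
        rw [setIntegral_const, measureReal_def, hvol, ENNReal.toReal_ofReal hx0, smul_eq_mul]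
      have key : |x| * (2 ^ (n + 1) / E) ≤ 2 ^ (n + 3) / D := by
        rw [mul_div_assoc', div_le_div_iff₀ hE0 hD0]
        have hgoal : |x| * D ≤ 4 * E := by
          rw [hDdef, hmeq, hEdef]
          rcases le_total (|x|) 1 with h | h
          · have hr1 : |x| ^ γ ≤ 1 := Real.rpow_le_one hx0 h hγ.le
            have hr2 : (0:ℝ) ≤ |x| ^ (n + 1) := by positivity
            nlinarith
          · have hr1 : |x| ^ γ ≤ |x| := by
              calc |x| ^ γ ≤ |x| ^ (1:ℝ) := Real.rpow_le_rpow_of_exponent_le h hγ1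
                _ = |x| := Real.rpow_one _
            have hr2 : |x| ^ 2 ≤ |x| ^ (n + 1) := pow_le_pow_right₀ h (by omega)
            have hr3 : |x| * |x| ^ γ ≤ |x| * |x| := mul_le_mul_of_nonneg_left hr1 hx0
            have hr4 : |x| ≤ |x| * |x| := le_mul_of_one_le_left hx0 h
            have hr5 : |x| * |x| = |x| ^ 2 := (sq (|x|)).symm
            nlinarith
        calc |x| * 2 ^ (n + 1) * D = 2 ^ (n + 1) * (|x| * D) := by ring
          _ ≤ 2 ^ (n + 1) * (4 * E) := by
              apply mul_le_mul_of_nonneg_left hgoal (by positivity)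
          _ = 2 ^ (n + 3) * E := by ring
      have hQ2 : (0:ℝ) ≤ 2 ^ (n + 2) * Q := mul_nonneg (by positivity) hQnn
      calc ∫ y in Aᶜ, f y ≤ ∫ _ in Aᶜ, (2 ^ (n + 1) / E : ℝ) := h1
        _ = |x| * (2 ^ (n + 1) / E) := h2
        _ ≤ 2 ^ (n + 3) / D := key
        _ ≤ (2 ^ (n + 3) + 2 ^ (n + 2) * Q) / D := by
            rw [div_le_div_iff_of_pos_right hD0]
            linarith
    · -- 1 < γ : use integrability of 1/(1+|y|^γ)
      have hQint : Integrable (fun y : ℝ => 1 / (1 + |y| ^ γ)) := cde_integrable_aux hγ1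
      have hptc : ∀ y ∈ Aᶜ, f y ≤ (2 ^ (n + 1) / E) * (1 / (1 + |y| ^ γ)) := by
        intro y hy
        have h1 := hEbound y hy
        have heq : f y = (1 / (1 + |x - y| ^ (n + 1))) * (1 / (1 + |y| ^ γ)) := by
          rw [hf, one_div_mul_one_div]
        rw [heq]
        apply mul_le_mul_of_nonneg_right _ (by positivity)
        rw [div_le_div_iff₀ (ha y) hE0]
        linarith
      have h1 : ∫ y in Aᶜ, f y ≤ ∫ y in Aᶜ, (2 ^ (n + 1) / E) * (1 / (1 + |y| ^ γ)) :=
        setIntegral_mono_on hf_int.integrableOn ((hQint.const_mul _).integrableOn)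
          hA.compl hptc
      have h2 : ∫ y in Aᶜ, (2 ^ (n + 1) / E) * (1 / (1 + |y| ^ γ))
          ≤ ∫ y : ℝ, (2 ^ (n + 1) / E) * (1 / (1 + |y| ^ γ)) :=
        setIntegral_le_integral (hQint.const_mul _) (ae_of_all _ fun y => by positivity)
      have h3 : ∫ y : ℝ, (2 ^ (n + 1) / E) * (1 / (1 + |y| ^ γ)) = (2 ^ (n + 1) / E) * Q := by
        rw [integral_const_mul]
      have key : (2 ^ (n + 1) / E) * Q ≤ (2 ^ (n + 2) * Q) / D := by
        have hdiv : (2:ℝ) ^ (n + 1) / E ≤ 2 ^ (n + 2) / D := by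
          rw [div_le_div_iff₀ hE0 hD0]
          have hpow : (2:ℝ) ^ (n + 2) = 2 ^ (n + 1) * 2 := by ring
          nlinarith [hDE, pow_pos (by norm_num : (0:ℝ) < 2) (n + 1)]
        calc (2 ^ (n + 1) / E) * Q ≤ (2 ^ (n + 2) / D) * Q :=
              mul_le_mul_of_nonneg_right hdiv hQnn
          _ = (2 ^ (n + 2) * Q) / D := by ring
      have h23 : (0:ℝ) < 2 ^ (n + 3) := by positivity
      calc ∫ y in Aᶜ, f y ≤ ∫ y in Aᶜ, (2 ^ (n + 1) / E) * (1 / (1 + |y| ^ γ)) := h1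
        _ ≤ ∫ y : ℝ, (2 ^ (n + 1) / E) * (1 / (1 + |y| ^ γ)) := h2
        _ = (2 ^ (n + 1) / E) * Q := h3
        _ ≤ (2 ^ (n + 2) * Q) / D := key
        _ ≤ (2 ^ (n + 3) + 2 ^ (n + 2) * Q) / D := by
            rw [div_le_div_iff_of_pos_right hD0]
            linarith
  have hsplit := integral_add_compl hA hf_int
  calc ∫ y : ℝ, f y = (∫ y in A, f y) + ∫ y in Aᶜ, f y := hsplit.symm
    _ ≤ (2 ^ γ * 2 * P) / D + (2 ^ (n + 3) + 2 ^ (n + 2) * Q) / D := add_le_add hIA hIAc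
    _ = (2 ^ γ * 2 * P + 2 ^ (n + 3) + 2 ^ (n + 2) * Q) / D := by
        rw [← add_div]
        ring_nf
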